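/- There is an absolute constant d₀ such that for all d ≥ d₀ there exist subsets F₁,…,F_d of {1,…,d} with |F_k| = ⌈d/2⌉ for every k, and |F_k ∩ F_{k'}| < 7d/26 for all k ≠ k'. -/

import Mathlib

open Finset

lemma fiber_card {V W : Type*} [AddCommGroup V] [Fintype V] [DecidableEq V]
    [AddCommGroup W] [Fintype W] [DecidableEq W] (f : V →+ W) (hf : Function.Surjective f)
    (c : W) : (univ.filter fun v => f v = c).card * Fintype.card W = Fintype.card V := by
  have key : ∀ c' : W, (univ.filter fun v => f v = c').card = (univ.filter fun v => f v = c).card := by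
    intro c'
    obtain ⟨v₀, hv₀⟩ := hf (c - c')
    apply Finset.card_bij (fun x _ => x + v₀)
    · intro a ha
      simp only [mem_filter, mem_univ, true_and] at ha ⊢
      rw [map_add, ha, hv₀]
      abel
    · intro a₁ _ a₂ _ h
      exact add_right_cancel h
    · intro bb hb
      simp only [mem_filter, mem_univ, true_and] at hb ⊢
      refine ⟨bb - v₀, ?_, by abel⟩
      rw [map_sub, hb, hv₀]
      abel
  have h1 : Fintype.card V = ∑ c' : W, (univ.filter fun v => f v = c').card := by
    simpa using Finset.card_eq_sum_card_fiberwise (f := f) (s := univ) (t := univ)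
      (fun x _ => mem_univ (f x))
  rw [h1]
  simp only [key]
  rw [Finset.sum_const, card_univ, smul_eq_mul, mul_comm]

lemma zmod2_cases (x : ZMod 2) : x = 0 ∨ x = 1 := by revert x; decide

lemma count_one {b : ℕ} (s : Fin b → ZMod 2) (hs : s ≠ 0) :
    (univ.filter fun v : Fin b → ZMod 2 => (∑ i, s i * v i) = 1).card = 2 ^ (b - 1) := by
  have hb : 1 ≤ b := by
    rcases Nat.eq_zero_or_pos b with h | h
    · exfalso; apply hs; subst h; funext i; exact absurd i.2 (by omega)
    · exact h
  obtain ⟨i₀, hi₀⟩ : ∃ i, s i ≠ 0 := by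
    by_contra h; push_neg at h; exact hs (funext fun i => h i)
  have hsi : s i₀ = 1 := (zmod2_cases (s i₀)).resolve_left hi₀
  let f : (Fin b → ZMod 2) →+ ZMod 2 :=
    { toFun := fun v => ∑ i, s i * v i
      map_zero' := by simp
      map_add' := by intro v w; simp [mul_add, Finset.sum_add_distrib] }
  have hf : Function.Surjective f := by
    intro c
    refine ⟨Pi.single i₀ c, ?_⟩
    show (∑ i, s i * Pi.single (M := fun _ => ZMod 2) i₀ c i) = c
    rw [Finset.sum_eq_single i₀]
    · rw [Pi.single_eq_same, hsi, one_mul]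
    · intro j _ hj; rw [Pi.single_eq_of_ne hj, mul_zero]
    · intro h; exact absurd (mem_univ i₀) h
  have := fiber_card f hf 1
  rw [Fintype.card_fun] at this
  simp only [ZMod.card, Fintype.card_fin] at this
  have h2 : (2:ℕ) ^ b = 2 ^ (b-1) * 2 := by
    rw [← pow_succ]; congr 1; omega
  show (univ.filter fun v : Fin b → ZMod 2 => f v = 1).card = 2 ^ (b - 1)
  omega

lemma count_two {b : ℕ} (s t : Fin b → ZMod 2) (hs : s ≠ 0) (ht : t ≠ 0) (hst : s ≠ t) :
    (univ.filter fun v : Fin b → ZMod 2 =>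
      (∑ i, s i * v i) = 1 ∧ (∑ i, t i * v i) = 1).card = 2 ^ (b - 2) := by
  classical
  let f : (Fin b → ZMod 2) →+ (ZMod 2 × ZMod 2) :=
    { toFun := fun v => (∑ i, s i * v i, ∑ i, t i * v i)
      map_zero' := by simp
      map_add' := by intro v w; simp [mul_add, Finset.sum_add_distrib, Prod.ext_iff] }
  have hfap : ∀ v, f v = (∑ i, s i * v i, ∑ i, t i * v i) := fun _ => rfl
  let P : Fin b → (Fin b → ZMod 2) := fun i => Pi.single (M := fun _ => ZMod 2) i 1
  have single_eval : ∀ (u : Fin b → ZMod 2) (i₀ : Fin b), (∑ i, u i * P i₀ i) = u i₀ := by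
    intro u i₀
    rw [Finset.sum_eq_single i₀]
    · show u i₀ * Pi.single (M := fun _ => ZMod 2) i₀ 1 i₀ = u i₀
      rw [Pi.single_eq_same, mul_one]
    · intro j _ hj
      show u j * Pi.single (M := fun _ => ZMod 2) i₀ 1 j = 0
      rw [Pi.single_eq_of_ne hj, mul_zero]
    · intro h; exact absurd (mem_univ i₀) h
  have fP : ∀ i, f (P i) = (s i, t i) := by
    intro i; rw [hfap, single_eval, single_eval]
  have hf : Function.Surjective f := by
    have hex : ∃ a bb, f a = (1, 0) ∧ f bb = (0, 1) := by
      obtain ⟨i, hi⟩ : ∃ i, s i ≠ t i := by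
        by_contra h; push_neg at h; exact hst (funext h)
      rcases zmod2_cases (s i) with hsi | hsi <;> rcases zmod2_cases (t i) with hti | hti
      · exact absurd (hsi.trans hti.symm) hi
      · obtain ⟨j, hj⟩ : ∃ j, s j ≠ 0 := by
          by_contra h; push_neg at h; exact hs (funext h)
        have hsj : s j = 1 := (zmod2_cases (s j)).resolve_left hj
        rcases zmod2_cases (t j) with htj | htj
        · exact ⟨P j, P i, by rw [fP, hsj, htj], by rw [fP, hsi, hti]⟩
        · refine ⟨P j + P i, P i, ?_, by rw [fP, hsi, hti]⟩
          rw [map_add, fP, fP, hsj, htj, hsi, hti, Prod.mk_add_mk]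
          decide
      · obtain ⟨j, hj⟩ : ∃ j, t j ≠ 0 := by
          by_contra h; push_neg at h; exact ht (funext h)
        have htj : t j = 1 := (zmod2_cases (t j)).resolve_left hj
        rcases zmod2_cases (s j) with hsj | hsj
        · exact ⟨P i, P j, by rw [fP, hsi, hti], by rw [fP, hsj, htj]⟩
        · refine ⟨P i, P j + P i, by rw [fP, hsi, hti], ?_⟩
          rw [map_add, fP, fP, hsj, htj, hsi, hti, Prod.mk_add_mk]
          decide
      · exact absurd (hsi.trans hti.symm) hi
    obtain ⟨a, bb, ha, hb⟩ := hex
    intro c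
    obtain ⟨x, y⟩ := c
    rcases zmod2_cases x with hx | hx <;> rcases zmod2_cases y with hy | hy <;> subst hx hy
    · exact ⟨0, by rw [map_zero]; rfl⟩
    · exact ⟨bb, hb⟩
    · exact ⟨a, ha⟩
    · exact ⟨a + bb, by rw [map_add, ha, hb]; decide⟩
  have hcard := fiber_card f hf (1, 1)
  rw [Fintype.card_fun] at hcard
  simp only [ZMod.card, Fintype.card_fin, Fintype.card_prod] at hcard
  have hb2 : 2 ≤ b := by
    by_contra h
    push_neg at h
    interval_cases b
    · exact hs (funext fun i => absurd i.2 (by omega))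
    · have h1 : s 0 = 1 := by
        rcases zmod2_cases (s 0) with h | h
        · exact absurd (funext fun i => by rw [Fin.fin_one_eq_zero i]; exact h) hs
        · exact h
      have h2 : t 0 = 1 := by
        rcases zmod2_cases (t 0) with h | h
        · exact absurd (funext fun i => by rw [Fin.fin_one_eq_zero i]; exact h) ht
        · exact h
      exact hst (funext fun i => by rw [Fin.fin_one_eq_zero i, h1, h2])
  have hfil : (univ.filter fun v : Fin b → ZMod 2 =>
      (∑ i, s i * v i) = 1 ∧ (∑ i, t i * v i) = 1) = (univ.filter fun v => f v = (1,1)) := by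
    apply filter_congr
    intro v _
    rw [hfap, Prod.mk.injEq]
  rw [hfil]
  have h2 : (2:ℕ) ^ b = 2 ^ (b-2) * (2 * 2) := by
    rw [← mul_assoc, ← pow_succ, ← pow_succ]; congr 1; omega
  omega

lemma digits_inj {q : ℕ} (hq : 1 < q) :
    ∀ (t n n' : ℕ), n < q ^ t → n' < q ^ t →
      (∀ i, i < t → n / q ^ i % q = n' / q ^ i % q) → n = n' := by
  intro t
  induction t with
  | zero => intro n n' hn hn' _; simp only [pow_zero, Nat.lt_one_iff] at hn hn'; omega
  | succ t ih =>
    intro n n' hn hn' h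
    have h0 := h 0 (by omega)
    simp only [pow_zero, Nat.div_one] at h0
    have hrec : n / q = n' / q := by
      apply ih
      · rw [Nat.div_lt_iff_lt_mul (by omega)]
        calc n < q ^ (t+1) := hn
        _ = q ^ t * q := by rw [pow_succ]
      · rw [Nat.div_lt_iff_lt_mul (by omega)]
        calc n' < q ^ (t+1) := hn'
        _ = q ^ t * q := by rw [pow_succ]
      · intro i hi
        have := h (i+1) (by omega)
        rwa [pow_succ', ← Nat.div_div_eq_div_mul, ← Nat.div_div_eq_div_mul] at this
    have e1 := Nat.mod_add_div n q
    have e2 := Nat.mod_add_div n' q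
    have e3 : q * (n / q) = q * (n' / q) := by rw [hrec]
    omega

lemma agree_le {q : ℕ} (hq : q.Prime) {m : ℕ} (hm : m ≤ q) (a c : Fin 4 → ZMod q)
    (h : a ≠ c) :
    (univ.filter fun j : Fin m =>
      (∑ i : Fin 4, a i * ((j : ℕ) : ZMod q) ^ (i : ℕ)) =
      (∑ i : Fin 4, c i * ((j : ℕ) : ZMod q) ^ (i : ℕ))).card ≤ 3 := by
  haveI : Fact q.Prime := ⟨hq⟩
  set P : Polynomial (ZMod q) := ∑ i : Fin 4, Polynomial.C (a i - c i) * Polynomial.X ^ (i : ℕ)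
    with hP
  have hPne : P ≠ 0 := by
    obtain ⟨i₀, hi₀⟩ : ∃ i, a i ≠ c i := by
      by_contra hh; push_neg at hh; exact h (funext hh)
    intro hP0
    have hc : P.coeff (i₀ : ℕ) = a i₀ - c i₀ := by
      rw [hP, Polynomial.finset_sum_coeff]
      rw [Finset.sum_eq_single i₀]
      · rw [Polynomial.coeff_C_mul, Polynomial.coeff_X_pow, if_pos rfl, mul_one]
      · intro j _ hj
        rw [Polynomial.coeff_C_mul, Polynomial.coeff_X_pow, if_neg, mul_zero]
        exact fun hh => hj (Fin.ext (by omega))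
      · intro hh; exact absurd (mem_univ i₀) hh
    rw [hP0] at hc
    simp only [Polynomial.coeff_zero] at hc
    exact hi₀ (by rwa [eq_comm, sub_eq_zero] at hc)
  have hdeg : P.natDegree ≤ 3 := by
    apply Polynomial.natDegree_sum_le_of_forall_le
    intro i _
    apply le_trans (Polynomial.natDegree_C_mul_le _ _)
    rw [Polynomial.natDegree_X_pow]
    omega
  have hroots : ∀ j : Fin m, (∑ i : Fin 4, a i * ((j : ℕ) : ZMod q) ^ (i : ℕ)) =
      (∑ i : Fin 4, c i * ((j : ℕ) : ZMod q) ^ (i : ℕ)) →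
      ((j : ℕ) : ZMod q) ∈ P.roots.toFinset := by
    intro j hj
    rw [Multiset.mem_toFinset, Polynomial.mem_roots hPne]
    rw [Polynomial.IsRoot, hP]
    rw [Polynomial.eval_finset_sum]
    simp only [Polynomial.eval_mul, Polynomial.eval_C, Polynomial.eval_pow, Polynomial.eval_X,
      sub_mul, Finset.sum_sub_distrib]
    rw [hj]; ring
  calc (univ.filter fun j : Fin m =>
      (∑ i : Fin 4, a i * ((j : ℕ) : ZMod q) ^ (i : ℕ)) =
      (∑ i : Fin 4, c i * ((j : ℕ) : ZMod q) ^ (i : ℕ))).card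
      ≤ P.roots.toFinset.card := by
        refine Finset.card_le_card_of_injOn (fun j : Fin m => ((j : ℕ) : ZMod q)) ?_ ?_
        · intro j hj
          simp only [Finset.mem_coe, mem_filter, mem_univ, true_and] at hj
          exact hroots j hj
        · intro j₁ _ j₂ _ hj
          have v1 : (((j₁ : ℕ) : ZMod q)).val = (j₁ : ℕ) := ZMod.val_natCast_of_lt (by omega)
          have v2 : (((j₂ : ℕ) : ZMod q)).val = (j₂ : ℕ) := ZMod.val_natCast_of_lt (by omega)
          simp only at hj
          apply Fin.ext
          rw [← v1, ← v2, hj]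
    _ ≤ Multiset.card P.roots := Multiset.toFinset_card_le _
    _ ≤ P.natDegree := Polynomial.card_roots' P
    _ ≤ 3 := hdeg

theorem stmt_13 :
    ∃ d₀ : ℕ, ∀ d : ℕ, d₀ ≤ d →
      ∃ F : Fin d → Finset (Fin d),
        (∀ k, (F k).card = ⌈(d : ℝ) / 2⌉₊) ∧
        (∀ k k', k ≠ k' → ((F k ∩ F k').card : ℝ) < 7 * d / 26) := by
  classical
  use 2 ^ 24
  intro d hd
  have hd1 : 1 ≤ d := le_trans (by norm_num) hd
  set L := Nat.log 2 d with hL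
  set b := L / 2 + 2 with hbdef
  set B := 2 ^ b with hBdef
  set m := d / B with hmdef
  have h2L : 2 ^ L ≤ d := Nat.pow_log_le_self 2 (by omega)
  have hdL : d < 2 ^ (L + 1) := Nat.lt_pow_succ_log_self (by norm_num) d
  have hL24 : 24 ≤ L := by
    by_contra h
    push_neg at h
    have : 2 ^ (L + 1) ≤ 2 ^ 24 := Nat.pow_le_pow_right (by norm_num) (by omega)
    omega
  have hb14 : 14 ≤ b := by omega
  have hBB1 : 4 * d < B * B := by
    have h1 : B * B = 2 ^ (b + b) := by rw [hBdef, ← pow_add]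
    have h2 : L + 3 ≤ b + b := by omega
    have h3 : (2:ℕ) ^ (L + 3) ≤ 2 ^ (b + b) := Nat.pow_le_pow_right (by norm_num) h2
    have h4 : (2:ℕ) ^ (L + 3) = 8 * 2 ^ L := by rw [pow_add]; ring
    omega
  have hBB2 : B * B ≤ 16 * d := by
    have h1 : B * B = 2 ^ (b + b) := by rw [hBdef, ← pow_add]
    have h2 : b + b ≤ L + 4 := by omega
    have h3 : (2:ℕ) ^ (b + b) ≤ 2 ^ (L + 4) := Nat.pow_le_pow_right (by norm_num) h2
    have h4 : (2:ℕ) ^ (L + 4) = 16 * 2 ^ L := by rw [pow_add]; ring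
    omega
  have hB16 : 16 ≤ B := by
    have : (2:ℕ) ^ 4 ≤ 2 ^ b := Nat.pow_le_pow_right (by norm_num) (by omega)
    simpa using this
  have hB0 : 0 < B := by omega
  have hBd : B ≤ d := by
    have h1 : B * 16 ≤ B * B := Nat.mul_le_mul_left B hB16
    have h2 : B * 16 ≤ 16 * d := le_trans h1 hBB2
    omega
  have hdm : B * m + d % B = d := by rw [hmdef]; exact Nat.div_add_mod d B
  have hdmod : d % B < B := Nat.mod_lt _ hB0
  have hmB : m * B ≤ d := by
    have h : m * B = B * m := Nat.mul_comm _ _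
    omega
  have hdmB : d + 1 ≤ (m + 1) * B := by
    have h : (m + 1) * B = B * m + B := by ring
    omega
  have hm1 : 1 ≤ m := (Nat.one_le_div_iff hB0).2 hBd
  -- Bertrand prime
  obtain ⟨q, hq, hmq, hq2m⟩ := Nat.exists_prime_lt_and_le_two_mul m (by omega)
  haveI : Fact q.Prime := ⟨hq⟩
  have hq1 : 1 < q := hq.one_lt
  have hqB : q < B := by
    have h1 : (2 * m) * B ≤ 2 * d := by
      have := Nat.mul_le_mul_right B (le_refl (2 * m))
      calc (2 * m) * B = 2 * (m * B) := by ring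
      _ ≤ 2 * d := by omega
    have h2 : (2 * m) * B < B * B := by omega
    have h3 : 2 * m < B := Nat.lt_of_mul_lt_mul_right h2
    omega
  have hdq4 : d < q ^ 4 := by
    by_contra h
    push_neg at h
    have hqB' : d + 1 ≤ q * B := by
      have h1 : (m + 1) * B ≤ q * B := Nat.mul_le_mul_right B (by omega)
      omega
    have h1 : (d + 1) ^ 4 ≤ (q * B) ^ 4 := Nat.pow_le_pow_left hqB' 4
    have h2 : (q * B) ^ 4 = q ^ 4 * ((B * B) * (B * B)) := by ring
    have h3 : (B * B) * (B * B) ≤ (16 * d) * (16 * d) := Nat.mul_le_mul hBB2 hBB2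
    have h4 : q ^ 4 * ((B * B) * (B * B)) ≤ d * ((16 * d) * (16 * d)) :=
      Nat.mul_le_mul h h3
    have h5 : d * ((16 * d) * (16 * d)) = 256 * (d * d * d) := by ring
    have h6 : (d + 1) ^ 4 ≤ 256 * (d * d * d) := by omega
    have h7 : d * (d * d * d) ≤ (d + 1) ^ 4 := by nlinarith
    have h8 : d * (d * d * d) ≤ 256 * (d * d * d) := le_trans h7 h6
    have h9 : d ≤ 256 := Nat.le_of_mul_le_mul_right (by
      calc d * (d * d * d) ≤ 256 * (d * d * d) := h8
      ) (by positivity)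
    omega
  -- digits of keys
  set dig : Fin d → Fin 4 → ZMod q :=
    (fun k i => ((((k : ℕ) + 1) / q ^ (i : ℕ) % q : ℕ) : ZMod q)) with hdig
  have dig_nat : ∀ (k : Fin d) (i : Fin 4),
      (dig k i).val = ((k : ℕ) + 1) / q ^ (i : ℕ) % q := by
    intro k i
    rw [hdig]
    exact ZMod.val_natCast_of_lt (Nat.mod_lt _ (by omega))
  have dig_inj : ∀ k k' : Fin d, dig k = dig k' → k = k' := by
    intro k k' h
    apply Fin.ext
    have hlt : (k : ℕ) + 1 < q ^ 4 := by omega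
    have hlt' : (k' : ℕ) + 1 < q ^ 4 := by omega
    have := digits_inj hq1 4 ((k : ℕ) + 1) ((k' : ℕ) + 1) hlt hlt' ?_
    · omega
    · intro i hi
      have h1 := dig_nat k ⟨i, hi⟩
      have h2 := dig_nat k' ⟨i, hi⟩
      rw [h] at h1
      simp only at h1 h2
      omega
  have dig_ne : ∀ k : Fin d, dig k ≠ 0 := by
    intro k hk
    have : (k : ℕ) + 1 = 0 := by
      apply digits_inj hq1 4 ((k : ℕ) + 1) 0 (by omega) (by positivity)
      intro i hi
      have h1 := dig_nat k ⟨i, hi⟩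
      rw [hk] at h1
      simp only [Pi.zero_apply, ZMod.val_zero] at h1
      simp [← h1]
    omega
  -- symbols
  set sym : Fin d → Fin m → ZMod q :=
    (fun k j => ∑ i : Fin 4, dig k i * ((j : ℕ) : ZMod q) ^ (i : ℕ)) with hsym
  have agree : ∀ k k' : Fin d, k ≠ k' →
      (univ.filter fun j : Fin m => sym k j = sym k' j).card ≤ 3 := by
    intro k k' hkk
    exact agree_le hq (le_of_lt hmq) (dig k) (dig k')
      (fun h => hkk (dig_inj _ _ h))
  have sym_zero : ∀ k : Fin d,
      (univ.filter fun j : Fin m => sym k j = 0).card ≤ 3 := by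
    intro k
    have h0 : ∀ j : Fin m,
        (∑ i : Fin 4, (0 : Fin 4 → ZMod q) i * ((j : ℕ) : ZMod q) ^ (i : ℕ)) = 0 := by
      intro j; simp
    have := agree_le hq (le_of_lt hmq) (dig k) 0 (dig_ne k)
    calc (univ.filter fun j : Fin m => sym k j = 0).card
        = (univ.filter fun j : Fin m =>
            (∑ i : Fin 4, dig k i * ((j : ℕ) : ZMod q) ^ (i : ℕ)) =
            (∑ i : Fin 4, (0 : Fin 4 → ZMod q) i * ((j : ℕ) : ZMod q) ^ (i : ℕ))).card := by
          apply congrArg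
          apply filter_congr
          intro j _
          rw [h0 j, hsym]
    _ ≤ 3 := this
  -- the embedding ι from symbols to masks
  have hcardZq : Fintype.card (ZMod q) = q := ZMod.card q
  have hcardV : Fintype.card (Fin b → ZMod 2) = B := by
    rw [Fintype.card_fun]
    simp [ZMod.card, hBdef]
  obtain ⟨e⟩ : Nonempty (ZMod q ↪ (Fin b → ZMod 2)) := by
    apply Function.Embedding.nonempty_of_card_le
    rw [hcardZq, hcardV]
    omega
  set ι : ZMod q → (Fin b → ZMod 2) := fun x => (Equiv.swap (e 0) 0) (e x) with hι
  have ι_inj : Function.Injective ι := (Equiv.injective _).comp e.injective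
  have ι_zero : ι 0 = 0 := Equiv.swap_apply_left _ _
  have ι_ne : ∀ x : ZMod q, x ≠ 0 → ι x ≠ 0 := by
    intro x hx h
    exact hx (ι_inj (h.trans ι_zero.symm))
  -- block embeddings
  set eVB : (Fin b → ZMod 2) ≃ Fin B := Fintype.equivFinOfCardEq hcardV with heVB
  have emblt : ∀ (j : Fin m) (v : Fin b → ZMod 2), (j : ℕ) * B + (eVB v : ℕ) < d := by
    intro j v
    have h1 : ((j : ℕ) + 1) * B ≤ m * B := Nat.mul_le_mul_right B j.isLt
    have h2 : (eVB v : ℕ) < B := (eVB v).isLt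
    have h3 : ((j : ℕ) + 1) * B = (j : ℕ) * B + B := by ring
    omega
  set embD : Fin m → (Fin b → ZMod 2) → Fin d :=
    (fun j v => ⟨(j : ℕ) * B + (eVB v : ℕ), emblt j v⟩) with hembD
  have embD_inj : ∀ j j' v v', embD j v = embD j' v' → j = j' ∧ v = v' := by
    intro j j' v v' h
    have hval : (j : ℕ) * B + (eVB v : ℕ) = (j' : ℕ) * B + (eVB v' : ℕ) :=
      congrArg Fin.val h
    have hdiv : ∀ (a c : ℕ), c < B → (a * B + c) / B = a := by
      intro a c hc
      rw [mul_comm, Nat.mul_add_div hB0, Nat.div_eq_of_lt hc, add_zero]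
    have hj : (j : ℕ) = (j' : ℕ) := by
      rw [← hdiv (j : ℕ) (eVB v : ℕ) (eVB v).isLt, hval,
        hdiv (j' : ℕ) (eVB v' : ℕ) (eVB v').isLt]
    refine ⟨Fin.ext hj, ?_⟩
    rw [hj] at hval
    have : (eVB v : ℕ) = (eVB v' : ℕ) := by omega
    exact eVB.injective (Fin.ext this)
  set embF : Fin m → ((Fin b → ZMod 2) ↪ Fin d) :=
    (fun j => ⟨embD j, fun v v' h => (embD_inj j j v v' h).2⟩) with hembF
  -- inner sets
  set Gv : (Fin b → ZMod 2) → Finset (Fin b → ZMod 2) :=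
    (fun s => univ.filter fun v => (∑ i, s i * v i) = 1) with hGv
  have Gv_zero : Gv 0 = ∅ := by
    rw [hGv]
    ext v
    simp only [mem_filter, mem_univ, true_and, notMem_empty, iff_false]
    intro h
    simp only [Pi.zero_apply, zero_mul, Finset.sum_const_zero] at h
    exact absurd h (by decide)
  have Gv_card : ∀ s, s ≠ 0 → (Gv s).card = 2 ^ (b - 1) := fun s hs => count_one s hs
  have Gv_le : ∀ s, (Gv s).card ≤ 2 ^ (b - 1) := by
    intro s
    by_cases hs : s = 0
    · rw [hs, Gv_zero]; simp
    · rw [Gv_card s hs]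
  -- the core sets
  set core : Fin d → Finset (Fin d) :=
    (fun k => univ.biUnion fun j : Fin m => (Gv (ι (sym k j))).map (embF j)) with hcore
  have core_card : ∀ k, (core k).card = ∑ j : Fin m, (Gv (ι (sym k j))).card := by
    intro k
    rw [hcore]
    rw [Finset.card_biUnion]
    · apply Finset.sum_congr rfl
      intro j _
      exact Finset.card_map _
    · intro j _ j' _ hjj
      rw [Function.onFun, Finset.disjoint_left]
      intro x hx hx'
      rw [Finset.mem_map] at hx hx'
      obtain ⟨v, _, hv⟩ := hx
      obtain ⟨v', _, hv'⟩ := hx'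
      exact hjj (embD_inj j j' v v' (hv.trans hv'.symm)).1
  have core_card_eq : ∀ k, (core k).card =
      (m - (univ.filter fun j : Fin m => sym k j = 0).card) * 2 ^ (b - 1) := by
    intro k
    rw [core_card k]
    rw [← Finset.sum_filter_add_sum_filter_not univ (fun j : Fin m => sym k j = 0)]
    have h1 : ∑ j ∈ univ.filter (fun j : Fin m => sym k j = 0),
        (Gv (ι (sym k j))).card = 0 := by
      apply Finset.sum_eq_zero
      intro j hj
      rw [mem_filter] at hj
      rw [hj.2, ι_zero, Gv_zero, Finset.card_empty]
    have h2 : ∑ j ∈ univ.filter (fun j : Fin m => ¬(sym k j = 0)),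
        (Gv (ι (sym k j))).card =
        (univ.filter (fun j : Fin m => ¬(sym k j = 0))).card * 2 ^ (b - 1) := by
      rw [Finset.sum_congr rfl (fun j hj => ?_), Finset.sum_const, smul_eq_mul]
      rw [mem_filter] at hj
      exact Gv_card _ (ι_ne _ hj.2)
    rw [h1, h2, zero_add]
    congr 1
    have h3 := Finset.card_filter_add_card_filter_not
      (s := (univ : Finset (Fin m))) (p := fun j : Fin m => sym k j = 0)
    simp only [Finset.card_univ, Fintype.card_fin] at h3
    omega
  -- size bounds
  have hpowb1 : 2 * 2 ^ (b - 1) = B := by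
    rw [hBdef]
    conv_rhs => rw [show b = b - 1 + 1 from (Nat.sub_add_cancel (by omega)).symm]
    rw [pow_succ']
  have hpowb2 : 4 * 2 ^ (b - 2) = B := by
    rw [hBdef]
    conv_rhs => rw [show b = b - 2 + 2 from (Nat.sub_add_cancel (by omega)).symm]
    rw [pow_add]
    ring
  set n := (d + 1) / 2 with hn
  have hceil : ⌈(d : ℝ) / 2⌉₊ = n := by
    rcases Nat.even_or_odd d with ⟨c, hc⟩ | ⟨c, hc⟩
    · subst hc
      have h1 : ((c + c : ℕ) : ℝ) / 2 = (c : ℝ) := by push_cast; ring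
      rw [h1, Nat.ceil_natCast, hn]
      omega
    · subst hc
      have h1 : ((2 * c + 1 : ℕ) : ℝ) / 2 = (c : ℝ) + 1 / 2 := by push_cast; ring
      rw [h1]
      have h2 : ⌈(c : ℝ) + 1 / 2⌉₊ = c + 1 := by
        rw [Nat.ceil_eq_iff (by omega)]
        constructor
        · push_cast; norm_num
        · push_cast; norm_num
      rw [h2, hn]
      omega
  have core_le_n : ∀ k, (core k).card ≤ n := by
    intro k
    rw [core_card_eq k]
    have h1 : (m - (univ.filter fun j : Fin m => sym k j = 0).card) * 2 ^ (b - 1)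
        ≤ m * 2 ^ (b - 1) := Nat.mul_le_mul_right _ (Nat.sub_le _ _)
    have h2 : 2 * (m * 2 ^ (b - 1)) = m * B := by rw [← hpowb1]; ring
    omega
  have core_ge : ∀ k, (m - 3) * 2 ^ (b - 1) ≤ (core k).card := by
    intro k
    rw [core_card_eq k]
    apply Nat.mul_le_mul_right
    have := sym_zero k
    omega
  -- choose the supersets
  have hnd : n ≤ d := by omega
  have hex : ∀ k : Fin d, ∃ T : Finset (Fin d), core k ⊆ T ∧ T.card = n := by
    intro k
    apply Finset.exists_superset_card_eq (core_le_n k)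
    rw [Fintype.card_fin]
    exact hnd
  choose F hF1 hF2 using hex
  refine ⟨F, fun k => by rw [hF2 k, hceil], ?_⟩
  intro k k' hkk
  -- core intersection bound
  have hcc : (core k ∩ core k').card ≤ 3 * 2 ^ (b - 1) + m * 2 ^ (b - 2) := by
    have hsub : core k ∩ core k' ⊆ univ.biUnion fun j : Fin m =>
        ((Gv (ι (sym k j)) ∩ Gv (ι (sym k' j))).map (embF j)) := by
      intro x hx
      rw [Finset.mem_inter] at hx
      obtain ⟨hx1, hx2⟩ := hx
      rw [hcore] at hx1 hx2
      simp only [Finset.mem_biUnion, mem_univ, true_and] at hx1 hx2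
      obtain ⟨j, hj⟩ := hx1
      obtain ⟨j', hj'⟩ := hx2
      rw [Finset.mem_map] at hj hj'
      obtain ⟨v, hv, hvx⟩ := hj
      obtain ⟨v', hv', hvx'⟩ := hj'
      have hee : embD j v = embD j' v' := hvx.trans hvx'.symm
      obtain ⟨hjj, hvv⟩ := embD_inj j j' v v' hee
      subst hjj
      rw [Finset.mem_biUnion]
      refine ⟨j, mem_univ j, ?_⟩
      rw [Finset.mem_map]
      refine ⟨v, ?_, hvx⟩
      rw [Finset.mem_inter]
      exact ⟨hv, by rw [hvv]; exact hv'⟩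
    apply le_trans (Finset.card_le_card hsub)
    apply le_trans Finset.card_biUnion_le
    have hterm : ∀ j : Fin m,
        ((Gv (ι (sym k j)) ∩ Gv (ι (sym k' j))).map (embF j)).card
        ≤ 2 ^ (b - 2) + if sym k j = sym k' j then 2 ^ (b - 1) else 0 := by
      intro j
      rw [Finset.card_map]
      by_cases h1 : sym k j = sym k' j
      · rw [if_pos h1]
        calc (Gv (ι (sym k j)) ∩ Gv (ι (sym k' j))).card
            ≤ (Gv (ι (sym k j))).card := Finset.card_le_card Finset.inter_subset_left
        _ ≤ 2 ^ (b - 1) := Gv_le _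
        _ ≤ 2 ^ (b - 2) + 2 ^ (b - 1) := Nat.le_add_left _ _
      · rw [if_neg h1, add_zero]
        by_cases h2 : sym k j = 0
        · rw [h2, ι_zero, Gv_zero, Finset.empty_inter, Finset.card_empty]
          exact Nat.zero_le _
        by_cases h3 : sym k' j = 0
        · rw [h3, ι_zero, Gv_zero, Finset.inter_empty, Finset.card_empty]
          exact Nat.zero_le _
        · have hinter : Gv (ι (sym k j)) ∩ Gv (ι (sym k' j)) =
              univ.filter fun v : Fin b → ZMod 2 =>
                (∑ i, ι (sym k j) i * v i) = 1 ∧ (∑ i, ι (sym k' j) i * v i) = 1 := by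
            rw [hGv]
            ext v
            simp only [Finset.mem_inter, mem_filter, mem_univ, true_and]
            try tauto
          rw [hinter, count_two _ _ (ι_ne _ h2) (ι_ne _ h3)
            (fun h => h1 (ι_inj h))]
    calc ∑ j : Fin m, ((Gv (ι (sym k j)) ∩ Gv (ι (sym k' j))).map (embF j)).card
        ≤ ∑ j : Fin m, (2 ^ (b - 2) + if sym k j = sym k' j then 2 ^ (b - 1) else 0) :=
          Finset.sum_le_sum (fun j _ => hterm j)
    _ = m * 2 ^ (b - 2) + ∑ j : Fin m, (if sym k j = sym k' j then 2 ^ (b - 1) else 0) := by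
          rw [Finset.sum_add_distrib, Finset.sum_const, Finset.card_univ, Fintype.card_fin,
            smul_eq_mul]
    _ ≤ m * 2 ^ (b - 2) + 3 * 2 ^ (b - 1) := by
          have h4 : ∑ j : Fin m, (if sym k j = sym k' j then 2 ^ (b - 1) else 0)
              = (univ.filter fun j : Fin m => sym k j = sym k' j).card * 2 ^ (b - 1) := by
            rw [← Finset.sum_filter, Finset.sum_const, smul_eq_mul]
          rw [h4]
          have := agree k k' hkk
          exact Nat.add_le_add_left (Nat.mul_le_mul_right _ this) _
    _ = 3 * 2 ^ (b - 1) + m * 2 ^ (b - 2) := by ring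
  -- padding bound
  have hpad : ∀ kk : Fin d, (F kk \ core kk).card = n - (core kk).card := by
    intro kk
    rw [Finset.card_sdiff_of_subset (hF1 kk), hF2 kk]
  have hpadle : ∀ kk : Fin d, (F kk \ core kk).card ≤ 4 * 2 ^ (b - 1) := by
    intro kk
    rw [hpad kk]
    have h1 : n ≤ (m + 1) * 2 ^ (b - 1) := by
      have h2 : 2 * ((m + 1) * 2 ^ (b - 1)) = (m + 1) * B := by rw [← hpowb1]; ring
      omega
    have h3 := core_ge kk
    have h4 : (m + 1) * 2 ^ (b - 1) - (m - 3) * 2 ^ (b - 1) ≤ 4 * 2 ^ (b - 1) := by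
      rw [← Nat.sub_mul]
      apply Nat.mul_le_mul_right
      omega
    omega
  have hsub2 : F k ∩ F k' ⊆ (core k ∩ core k') ∪ (F k \ core k) ∪ (F k' \ core k') := by
    intro x hx
    rw [Finset.mem_inter] at hx
    simp only [Finset.mem_union, Finset.mem_inter, Finset.mem_sdiff]
    by_cases h1 : x ∈ core k
    · by_cases h2 : x ∈ core k'
      · exact Or.inl (Or.inl ⟨h1, h2⟩)
      · exact Or.inr ⟨hx.2, h2⟩
    · exact Or.inl (Or.inr ⟨hx.1, h1⟩)
  have hX : (F k ∩ F k').card ≤ (core k ∩ core k').card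
      + (F k \ core k).card + (F k' \ core k').card := by
    apply le_trans (Finset.card_le_card hsub2)
    apply le_trans (Finset.card_union_le _ _)
    have := Finset.card_union_le (core k ∩ core k') (F k \ core k)
    omega
  -- numeric endgame
  have hbig : 572 * B < d := by
    by_contra h
    push_neg at h
    have h1 : d * d ≤ (572 * B) * (572 * B) := Nat.mul_le_mul h h
    have h2 : (572 * B) * (572 * B) = 327184 * (B * B) := by ring
    have h3 : 327184 * (B * B) ≤ 327184 * (16 * d) := Nat.mul_le_mul_left _ hBB2
    have h4 : d * d ≤ 5234944 * d := by omega
    have h5 : d ≤ 5234944 := Nat.le_of_mul_le_mul_right h4 (by omega)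
    omega
  have hmQ : 4 * (m * 2 ^ (b - 2)) ≤ d := by
    have h1 : 4 * (m * 2 ^ (b - 2)) = m * (4 * 2 ^ (b - 2)) := by ring
    rw [h1, hpowb2]
    exact hmB
  have hXle : (F k ∩ F k').card ≤ 11 * 2 ^ (b - 1) + m * 2 ^ (b - 2) := by
    have := hpadle k
    have := hpadle k'
    omega
  have hnat : 26 * (F k ∩ F k').card < 7 * d := by
    have h1 : 2 * 2 ^ (b - 1) = B := hpowb1
    -- 26 * X ≤ 286 * (2^(b-1)) + 26 * (m * 2^(b-2)) = 143 * B + 13 * (...)/2 ... do with omega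
    have h2 : 52 * (F k ∩ F k').card ≤ 572 * 2 ^ (b - 1) + 52 * (m * 2 ^ (b - 2)) := by
      omega
    have h3 : 572 * 2 ^ (b - 1) = 286 * B := by omega
    have h4 : 52 * (m * 2 ^ (b - 2)) = 13 * (4 * (m * 2 ^ (b - 2))) := by ring
    have h5 : 52 * (F k ∩ F k').card ≤ 286 * B + 13 * d := by omega
    omega
  -- conclude over ℝ
  have hcast : ((26 : ℕ) * (F k ∩ F k').card : ℝ) < ((7 : ℕ) * d : ℝ) := by
    exact_mod_cast hnat
  push_cast at hcast
  rw [lt_div_iff₀ (by norm_num : (0:ℝ) < 26)]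
  linarith
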